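/- For a piecewise affine path x on [0,T] with dx_t = a_n dt on [t_n, t_{n+1}) (partition 0 = t_0 ≤ t_1 ≤ ... ≤ t_N = T), the Chen series factorizes as a product of exponentials: 𝔖(x)_T = ∏_{n=0}^{N-1} exp((t_{n+1}-t_n) Σ_{i=0}^d a_n^i X_i) in ℝ[[X_0,...,X_d]], where a_n^0 = 1. -/

import Mathlib

open MeasureTheory intervalIntegral

/-- The algebra `ℝ[[X₀,…,X_d]]` of non-commutative formal power series,
encoded by coefficients indexed by words. -/
def NCSeries (d : ℕ) : Type := List (Fin (d + 1)) → ℝ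

/-- The unit `1` of `ℝ[[X₀,…,X_d]]`. -/
noncomputable def NCSeries.one {d : ℕ} : NCSeries d := fun w => if w = [] then 1 else 0

/-- The product in `ℝ[[X₀,…,X_d]]`. -/
noncomputable def NCSeries.mul {d : ℕ} (a b : NCSeries d) : NCSeries d := fun w =>
  ∑ k ∈ Finset.range (w.length + 1), a (w.take k) * b (w.drop k)

/-- Powers in `ℝ[[X₀,…,X_d]]`. -/
noncomputable def NCSeries.pow {d : ℕ} (a : NCSeries d) : ℕ → NCSeries d
  | 0 => NCSeries.one
  | k + 1 => NCSeries.mul a (NCSeries.pow a k)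

/-- The exponential `exp Y = Σ_{k ≥ 0} Y^k / k!` in `ℝ[[X₀,…,X_d]]` (for `Y` with zero
constant term the sum is finite on each coefficient). -/
noncomputable def NCSeries.exp {d : ℕ} (a : NCSeries d) : NCSeries d := fun w =>
  ∑ k ∈ Finset.range (w.length + 1), NCSeries.pow a k w / (Nat.factorial k : ℝ)

/-- Ordered product of a list of series, from left to right. -/
noncomputable def NCSeries.listProd {d : ℕ} : List (NCSeries d) → NCSeries d
  | [] => NCSeries.one
  | a :: l => NCSeries.mul a (NCSeries.listProd l)

/-- Iterated integral of an absolutely continuous path with derivative family `f`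
over the simplex `{s ≤ t₁ ≤ ⋯ ≤ t_k ≤ t}`, for the word `w = (i₁, …, i_k)`. -/
noncomputable def iterInt {d : ℕ} (f : Fin (d + 1) → ℝ → ℝ) :
    List (Fin (d + 1)) → ℝ → ℝ → ℝ
  | [], _, _ => 1
  | i :: w, s, t => ∫ u in s..t, f i u * iterInt f w u t

/-- The element `c (Σ_{i=0}^d aⁱ Xᵢ)` of `ℝ[[X₀,…,X_d]]`. -/
noncomputable def linearElt {d : ℕ} (c : ℝ) (a : Fin (d + 1) → ℝ) : NCSeries d := fun w =>
  match w with
  | [i] => c * a i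
  | _ => 0

variable {d : ℕ} {f : Fin (d + 1) → ℝ → ℝ}

theorem iterInt_nil (s t : ℝ) : iterInt f [] s t = 1 := rfl

theorem iterInt_cons (i : Fin (d+1)) (w : List (Fin (d+1))) (s t : ℝ) :
    iterInt f (i :: w) s t = ∫ u in s..t, f i u * iterInt f w u t := rfl

theorem iterInt_continuous (hf : ∀ i, LocallyIntegrable (f i) volume)
    (w : List (Fin (d+1))) (t : ℝ) : Continuous fun u => iterInt f w u t := by
  induction w generalizing t with
  | nil => exact continuous_const
  | cons i w ih =>
    have hint : ∀ a b : ℝ, IntervalIntegrable (fun v => f i v * iterInt f w v t) volume a b := by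
      intro a b
      rw [intervalIntegrable_iff]
      exact ((hf i).integrableOn_isCompact isCompact_uIcc).mono_set Set.uIoc_subset_uIcc
        |>.mul_continuousOn_of_subset ((ih t).continuousOn) measurableSet_uIoc
          isCompact_uIcc Set.uIoc_subset_uIcc
    have h1 : Continuous fun b => ∫ v in t..b, f i v * iterInt f w v t :=
      intervalIntegral.continuous_primitive hint t
    have h2 : (fun u => iterInt f (i :: w) u t)
        = fun u => -(∫ v in t..u, f i v * iterInt f w v t) := by
      funext u
      rw [iterInt_cons, intervalIntegral.integral_symm]
    rw [h2]
    exact h1.neg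

theorem iterInt_mul_intervalIntegrable (hf : ∀ i, LocallyIntegrable (f i) volume)
    (i : Fin (d+1)) (w : List (Fin (d+1))) (t a b : ℝ) :
    IntervalIntegrable (fun u => f i u * iterInt f w u t) volume a b := by
  rw [intervalIntegrable_iff]
  exact ((hf i).integrableOn_isCompact isCompact_uIcc).mono_set Set.uIoc_subset_uIcc
    |>.mul_continuousOn_of_subset ((iterInt_continuous hf w t).continuousOn) measurableSet_uIoc
      isCompact_uIcc Set.uIoc_subset_uIcc

theorem iterInt_chen (hf : ∀ i, LocallyIntegrable (f i) volume) :
    ∀ (w : List (Fin (d+1))) (s m t : ℝ),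
    iterInt f w s t = ∑ k ∈ Finset.range (w.length + 1),
      iterInt f (w.take k) s m * iterInt f (w.drop k) m t := by
  intro w
  induction w with
  | nil => intro s m t; simp [iterInt_nil]
  | cons i w ih =>
    intro s m t
    have hsplit : iterInt f (i :: w) s t
        = (∫ u in s..m, f i u * iterInt f w u t) + ∫ u in m..t, f i u * iterInt f w u t := by
      rw [iterInt_cons,
        intervalIntegral.integral_add_adjacent_intervals
          (iterInt_mul_intervalIntegrable hf i w t s m)
          (iterInt_mul_intervalIntegrable hf i w t m t)]
    have h1 : (∫ u in s..m, f i u * iterInt f w u t)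
        = ∑ j ∈ Finset.range (w.length + 1),
            iterInt f (i :: w.take j) s m * iterInt f (w.drop j) m t := by
      have heq : ∀ u : ℝ, f i u * iterInt f w u t
          = ∑ j ∈ Finset.range (w.length + 1),
              (f i u * iterInt f (w.take j) u m) * iterInt f (w.drop j) m t := by
        intro u
        rw [ih u m t, Finset.mul_sum]
        exact Finset.sum_congr rfl fun j _ => by ring
      rw [intervalIntegral.integral_congr (fun u _ => heq u)]
      rw [intervalIntegral.integral_finset_sum (fun j _ =>
        (iterInt_mul_intervalIntegrable hf i (w.take j) m s m).mul_const _)]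
      refine Finset.sum_congr rfl fun j _ => ?_
      rw [intervalIntegral.integral_mul_const, iterInt_cons]
    rw [hsplit, h1, ← iterInt_cons]
    conv_rhs => rw [show (i :: w).length + 1 = w.length + 1 + 1 from rfl, Finset.sum_range_succ']
    simp only [List.take_succ_cons, List.drop_succ_cons, List.take_zero, List.drop_zero,
      iterInt_nil, one_mul]

theorem iterInt_self (w : List (Fin (d+1))) (s : ℝ) :
    iterInt f w s s = if w = [] then 1 else 0 := by
  cases w with
  | nil => rfl
  | cons i w => simp [iterInt_cons]

theorem iterInt_const (b : Fin (d+1) → ℝ) :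
    ∀ (w : List (Fin (d+1))) (s t : ℝ), s ≤ t →
      (∀ u ∈ Set.Ico s t, ∀ i, f i u = b i) →
      iterInt f w s t
        = (t - s) ^ w.length * (w.map b).prod / (Nat.factorial w.length : ℝ) := by
  intro w
  induction w with
  | nil => intro s t _ _; simp [iterInt_nil]
  | cons i w ih =>
    intro s t hst hfb
    have hne : ∀ᵐ u : ℝ, u ≠ t := by
      rw [MeasureTheory.ae_iff]
      simpa using measure_singleton t
    set k := w.length with hk
    set P := (w.map b).prod with hP
    have hae : ∀ᵐ u : ℝ, u ∈ Set.uIoc s t →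
        f i u * iterInt f w u t = (b i * (P / (Nat.factorial k : ℝ))) * (t - u) ^ k := by
      filter_upwards [hne] with u hu hmem
      rw [Set.uIoc_of_le hst] at hmem
      have hu' : u ∈ Set.Ico s t := ⟨hmem.1.le, lt_of_le_of_ne hmem.2 hu⟩
      rw [hfb u hu' i, ih u t hmem.2 (fun v hv j => hfb v ⟨le_trans hu'.1 hv.1, hv.2⟩ j)]
      ring
    rw [iterInt_cons, intervalIntegral.integral_congr_ae hae,
      intervalIntegral.integral_const_mul,
      intervalIntegral.integral_comp_sub_left (fun x => x ^ k) t, sub_self,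
      integral_pow]
    have hfac : (Nat.factorial k : ℝ) ≠ 0 := Nat.cast_ne_zero.mpr (Nat.factorial_ne_zero k)
    simp only [List.length_cons, List.map_cons, List.prod_cons, Nat.factorial_succ]
    rw [zero_pow (Nat.succ_ne_zero k)]
    push_cast
    field_simp
    ring

theorem linearElt_eq_zero {c : ℝ} {b : Fin (d+1) → ℝ} {w : List (Fin (d+1))}
    (hw : w.length ≠ 1) : linearElt c b w = 0 := by
  match w with
  | [] => rfl
  | [i] => exact absurd rfl hw
  | i :: j :: r => rfl

theorem mul_linearElt_nil (c : ℝ) (b : Fin (d+1) → ℝ) (g : NCSeries d) :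
    NCSeries.mul (linearElt c b) g [] = 0 := by
  simp [NCSeries.mul, linearElt]

theorem mul_linearElt_cons (c : ℝ) (b : Fin (d+1) → ℝ) (g : NCSeries d)
    (i : Fin (d+1)) (w : List (Fin (d+1))) :
    NCSeries.mul (linearElt c b) g (i :: w) = (c * b i) * g w := by
  show (∑ k ∈ Finset.range ((i :: w).length + 1),
      linearElt c b ((i :: w).take k) * g ((i :: w).drop k)) = (c * b i) * g w
  rw [Finset.sum_eq_single_of_mem 1 (by simp)]
  · simp [linearElt]
  · intro k hk hk1
    rw [linearElt_eq_zero, zero_mul]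
    simp only [List.length_take, List.length_cons]
    simp only [Finset.mem_range, List.length_cons] at hk
    omega

theorem pow_linearElt (c : ℝ) (b : Fin (d+1) → ℝ) :
    ∀ (k : ℕ) (w : List (Fin (d+1))),
      NCSeries.pow (linearElt c b) k w
        = if w.length = k then (w.map fun i => c * b i).prod else 0 := by
  intro k
  induction k with
  | zero =>
    intro w
    cases w with
    | nil => simp [NCSeries.pow, NCSeries.one]
    | cons i w => simp [NCSeries.pow, NCSeries.one]
  | succ k ih =>
    intro w
    cases w with
    | nil => simp [NCSeries.pow, mul_linearElt_nil]
    | cons i w =>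
      show NCSeries.mul (linearElt c b) (NCSeries.pow (linearElt c b) k) (i :: w) = _
      rw [mul_linearElt_cons, ih]
      simp only [List.length_cons, List.map_cons, List.prod_cons, Nat.succ_eq_add_one,
        add_left_inj]
      split_ifs <;> ring

theorem exp_linearElt (c : ℝ) (b : Fin (d+1) → ℝ) (w : List (Fin (d+1))) :
    NCSeries.exp (linearElt c b) w
      = c ^ w.length * (w.map b).prod / (Nat.factorial w.length : ℝ) := by
  have hprod : ∀ w : List (Fin (d+1)), (w.map fun i => c * b i).prod
      = c ^ w.length * (w.map b).prod := by
    intro w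
    induction w with
    | nil => simp
    | cons i w ih => simp [ih, pow_succ]; ring
  show (∑ k ∈ Finset.range (w.length + 1),
      NCSeries.pow (linearElt c b) k w / (Nat.factorial k : ℝ)) = _
  rw [Finset.sum_eq_single_of_mem w.length (by simp)]
  · rw [pow_linearElt, if_pos rfl, hprod]
  · intro k _ hk
    rw [pow_linearElt, if_neg (by omega), zero_div]

theorem listProd_cons (x : NCSeries d) (l : List (NCSeries d)) :
    NCSeries.listProd (x :: l) = NCSeries.mul x (NCSeries.listProd l) := rfl

theorem main_aux (hf : ∀ i, LocallyIntegrable (f i) volume) :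
    ∀ (N : ℕ) (a : Fin N → Fin (d+1) → ℝ) (tt : Fin (N+1) → ℝ),
      Monotone tt →
      (∀ n : Fin N, ∀ u ∈ Set.Ico (tt n.castSucc) (tt n.succ), ∀ i, f i u = a n i) →
      ∀ w, iterInt f w (tt 0) (tt (Fin.last N))
        = NCSeries.listProd (List.ofFn fun n : Fin N =>
            NCSeries.exp (linearElt (tt n.succ - tt n.castSucc) (a n))) w := by
  intro N
  induction N with
  | zero =>
    intro a tt _ _ w
    rw [List.ofFn_zero]
    rw [show (Fin.last 0) = 0 from rfl, iterInt_self]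
    rfl
  | succ N ih =>
    intro a tt hmono haff w
    have e1 : ((0 : Fin (N+1)).castSucc : Fin (N+2)) = 0 := rfl
    have e2 : ((0 : Fin (N+1)).succ : Fin (N+2)) = 1 := by ext; simp
    rw [List.ofFn_succ, listProd_cons]
    rw [iterInt_chen hf w (tt 0) (tt 1) (tt (Fin.last (N+1)))]
    show _ = ∑ k ∈ Finset.range (w.length + 1), _ * _
    refine Finset.sum_congr rfl fun k _ => ?_
    have hrest := ih (fun n => a n.succ) (fun n => tt n.succ)
      (fun x y hxy => hmono (Fin.succ_le_succ_iff.mpr hxy))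
      (fun n u hu i => haff n.succ u (by rw [← Fin.succ_castSucc]; exact hu) i)
    simp only [Fin.succ_castSucc, Fin.succ_last, e2] at hrest
    congr 1
    · rw [iterInt_const (a 0) (w.take k) (tt 0) (tt 1)
        (by rw [← e1, ← e2]; exact hmono (Fin.castSucc_le_succ 0))
        (fun u hu i => haff 0 u (by rw [e1, e2] at *; exact hu) i),
        exp_linearElt, e1, e2]
    · exact hrest (w.drop k)

/-- **Chen series of a piecewise affine path as a product of exponentials.**
For a piecewise affine path `x` on `[0,T]` with `dx_t = a_n dt` on `[t_n, t_{n+1})`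
(partition `0 = t_0 ≤ ⋯ ≤ t_N = T`, with `a_n⁰ = 1` so that `x⁰_t = t`),
`𝔖(x)_T = ∏_{n=0}^{N-1} exp((t_{n+1} - t_n) Σ_{i=0}^d a_nⁱ Xᵢ)` in `ℝ[[X₀,…,X_d]]`. -/
theorem chen_series_piecewise_affine {d N : ℕ}
    (f : Fin (d + 1) → ℝ → ℝ) (a : Fin N → Fin (d + 1) → ℝ)
    (tt : Fin (N + 1) → ℝ) (T : ℝ)
    (hmono : Monotone tt) (h0 : tt 0 = 0) (hT : tt (Fin.last N) = T)
    (hf : ∀ i, MeasureTheory.LocallyIntegrable (f i) volume)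
    (ha0 : ∀ n, a n 0 = 1)
    (haff : ∀ n : Fin N, ∀ u ∈ Set.Ico (tt n.castSucc) (tt n.succ), ∀ i, f i u = a n i) :
    (fun w => iterInt f w 0 T : NCSeries d)
      = NCSeries.listProd
          (List.ofFn fun n : Fin N =>
            NCSeries.exp (linearElt (tt n.succ - tt n.castSucc) (a n))) := by
  funext w
  rw [← h0, ← hT]
  exact main_aux hf N a tt hmono haff w
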